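/- Let K = ℚ[s, Tb, Tc, Td] and let F be the free associative K-algebra on generators a, A, b, c, d. Let I be the two-sided ideal of F generated by b² − Tb, c² − Tc, d² − Td, Aa + b + c + d − s, and aA − 2s. In the quotient F/I, set x' = abcA, y = acA, z = abA, and E = y + z − Td + Tc + Tb + s². Then the identity x'·x' + 2s·E·x' = E·y·z − 4s²·Tb·Tc + Tb·y·y + Tc·z·z holds in F/I. -/
import Mathlib


noncomputable section
open MvPolynomial FreeAlgebra

/-- The coefficient ring `K = ℚ[s, Tb, Tc, Td]` with `s = X 0, Tb = X 1, Tc = X 2,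
Td = X 3`. -/
abbrev K16 : Type := MvPolynomial (Fin 4) ℚ

/-- The free associative `K`-algebra on `a = ι 0, A = ι 1, b = ι 2, c = ι 3, d = ι 4`. -/
abbrev F16 : Type := FreeAlgebra K16 (Fin 5)

/-- The relations `b² = Tb`, `c² = Tc`, `d² = Td`, `Aa + b + c + d = s`, `aA = 2s`. -/
inductive FlopRel : F16 → F16 → Prop
  | rb : FlopRel ((ι K16 (2 : Fin 5))^2) (algebraMap K16 F16 (X 1))
  | rc : FlopRel ((ι K16 (3 : Fin 5))^2) (algebraMap K16 F16 (X 2))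
  | rd : FlopRel ((ι K16 (4 : Fin 5))^2) (algebraMap K16 F16 (X 3))
  | rlin : FlopRel
      (ι K16 (1 : Fin 5) * ι K16 (0 : Fin 5) + ι K16 (2 : Fin 5) + ι K16 (3 : Fin 5) +
        ι K16 (4 : Fin 5)) (algebraMap K16 F16 (X 0))
  | raA : FlopRel (ι K16 (0 : Fin 5) * ι K16 (1 : Fin 5)) (2 * algebraMap K16 F16 (X 0))

/-- The universal flopping algebra of length 2 (with idempotents suppressed). -/
abbrev A16 : Type := RingQuot FlopRel

def π : F16 →ₐ[K16] A16 := RingQuot.mkAlgHom K16 FlopRel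

/-- `x' = abcA` -/
def x' : A16 := π (ι K16 0 * ι K16 2 * ι K16 3 * ι K16 1)
/-- `y = acA` -/
def y16 : A16 := π (ι K16 0 * ι K16 3 * ι K16 1)
/-- `z = abA` -/
def z16 : A16 := π (ι K16 0 * ι K16 2 * ι K16 1)

def s16 : A16 := algebraMap K16 A16 (X 0)
def Tb : A16 := algebraMap K16 A16 (X 1)
def Tc : A16 := algebraMap K16 A16 (X 2)
def Td : A16 := algebraMap K16 A16 (X 3)

/-- `E = y + z − Td + Tc + Tb + s²` -/
def E16 : A16 := y16 + z16 - Td + Tc + Tb + s16^2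

set_option maxHeartbeats 4000000 in
private theorem auxGL {R : Type} [Ring R] [Algebra K16 R] (va vA vb vc vd : R)
    (hb : vb * vb = algebraMap K16 R (X 1))
    (hc : vc * vc = algebraMap K16 R (X 2))
    (hd : vd * vd = algebraMap K16 R (X 3))
    (hlin : vA * va + vb + vc + vd = algebraMap K16 R (X 0))
    (haA : va * vA = 2 * algebraMap K16 R (X 0)) :
    va * vb * vc * vA * (va * vb * vc * vA) + 2 * algebraMap K16 R (X 0) * (va * vc * vA + va * vb * vA - algebraMap K16 R (X 3) + algebraMap K16 R (X 2) + algebraMap K16 R (X 1) + (algebraMap K16 R (X 0)) ^ 2) * (va * vb * vc * vA)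
      = (va * vc * vA + va * vb * vA - algebraMap K16 R (X 3) + algebraMap K16 R (X 2) + algebraMap K16 R (X 1) + (algebraMap K16 R (X 0)) ^ 2) * (va * vc * vA) * (va * vb * vA) - 4 * (algebraMap K16 R (X 0)) ^ 2 * algebraMap K16 R (X 1) * algebraMap K16 R (X 2) + algebraMap K16 R (X 1) * (va * vc * vA) * (va * vc * vA) + algebraMap K16 R (X 2) * (va * vb * vA) * (va * vb * vA) := by
  have r0 : vb * (vb) = (X 1 : K16) • ((1 : R)) := by
    rw [hb, Algebra.algebraMap_eq_smul_one]
  have r0t : ∀ x : R, vb * (vb * (x)) = (X 1 : K16) • x := by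
    intro x
    have h := congrArg (· * x) r0
    simp only [add_mul, smul_mul_assoc, mul_assoc, one_mul] at h
    linear_combination (norm := module) h
  have r1 : vc * (vc) = (X 2 : K16) • ((1 : R)) := by
    rw [hc, Algebra.algebraMap_eq_smul_one]
  have r1t : ∀ x : R, vc * (vc * (x)) = (X 2 : K16) • x := by
    intro x
    have h := congrArg (· * x) r1
    simp only [add_mul, smul_mul_assoc, mul_assoc, one_mul] at h
    linear_combination (norm := module) h
  have r2 : vd * (vd) = (X 3 : K16) • ((1 : R)) := by
    rw [hd, Algebra.algebraMap_eq_smul_one]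
  have r2t : ∀ x : R, vd * (vd * (x)) = (X 3 : K16) • x := by
    intro x
    have h := congrArg (· * x) r2
    simp only [add_mul, smul_mul_assoc, mul_assoc, one_mul] at h
    linear_combination (norm := module) h
  have r3 : vA * (va) = ((-1) : K16) • (vd) + ((-1) : K16) • (vc) + ((-1) : K16) • (vb) + (X 0 : K16) • ((1 : R)) := by
    have h := hlin
    rw [Algebra.algebraMap_eq_smul_one] at h
    linear_combination (norm := module) h
  have r3t : ∀ x : R, vA * (va * (x)) = ((-1) : K16) • (vd * (x)) + ((-1) : K16) • (vc * (x)) + ((-1) : K16) • (vb * (x)) + (X 0 : K16) • x := by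
    intro x
    have h := congrArg (· * x) r3
    simp only [add_mul, smul_mul_assoc, mul_assoc, one_mul] at h
    linear_combination (norm := module) h
  have r4 : va * (vA) = ((2) * X 0 : K16) • ((1 : R)) := by
    have h := haA
    rw [Algebra.algebraMap_eq_smul_one, two_mul] at h
    linear_combination (norm := module) h
  have r4t : ∀ x : R, va * (vA * (x)) = ((2) * X 0 : K16) • x := by
    intro x
    have h := congrArg (· * x) r4
    simp only [add_mul, smul_mul_assoc, mul_assoc, one_mul] at h
    linear_combination (norm := module) h
  have r5 : vd * (vA) = ((-1) : K16) • (vc * (vA)) + ((-1) : K16) • (vb * (vA)) + ((-1) * X 0 : K16) • (vA) := by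
    have h1 : vA * (va * (vA)) = ((-1) : K16) • (vd * (vA)) + ((-1) : K16) • (vc * (vA)) + ((-1) : K16) • (vb * (vA)) + (X 0 : K16) • (vA) := by
      rw [r3t]
      try simp only [r0, r0t, r1, r1t, r2, r2t, r3, r3t, r4, r4t, mul_assoc, mul_add, add_mul, smul_mul_assoc, mul_smul_comm, smul_smul, one_mul, mul_one, smul_add]
      try module
    have h2 : vA * (va * (vA)) = ((2) * X 0 : K16) • (vA) := by
      rw [r4]
      try simp only [r0, r0t, r1, r1t, r2, r2t, r3, r3t, r4, r4t, mul_assoc, mul_add, add_mul, smul_mul_assoc, mul_smul_comm, smul_smul, one_mul, mul_one, smul_add]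
      try module
    linear_combination (norm := module) h1 - h2
  have r5t : ∀ x : R, vd * (vA * (x)) = ((-1) : K16) • (vc * (vA * (x))) + ((-1) : K16) • (vb * (vA * (x))) + ((-1) * X 0 : K16) • (vA * (x)) := by
    intro x
    have h := congrArg (· * x) r5
    simp only [add_mul, smul_mul_assoc, mul_assoc, one_mul] at h
    linear_combination (norm := module) h
  have r6 : vd * (vc * (vA)) = ((-1) : K16) • (vd * (vb * (vA))) + (X 0 : K16) • (vc * (vA)) + (X 0 : K16) • (vb * (vA)) + ((-1) * X 3 + X 0 ^ 2 : K16) • (vA) := by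
    have h1 : vd * (vd * (vA)) = (X 3 : K16) • (vA) := by
      rw [r2t]
      try simp only [r0, r0t, r1, r1t, r2, r2t, r3, r3t, r4, r4t, r5, r5t, mul_assoc, mul_add, add_mul, smul_mul_assoc, mul_smul_comm, smul_smul, one_mul, mul_one, smul_add]
      try module
    have h2 : vd * (vd * (vA)) = ((-1) : K16) • (vd * (vc * (vA))) + ((-1) : K16) • (vd * (vb * (vA))) + (X 0 : K16) • (vc * (vA)) + (X 0 : K16) • (vb * (vA)) + (X 0 ^ 2 : K16) • (vA) := by
      rw [r5]
      try simp only [r0, r0t, r1, r1t, r2, r2t, r3, r3t, r4, r4t, r5, r5t, mul_assoc, mul_add, add_mul, smul_mul_assoc, mul_smul_comm, smul_smul, one_mul, mul_one, smul_add]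
      try module
    linear_combination (norm := module) h2 - h1
  have r6t : ∀ x : R, vd * (vc * (vA * (x))) = ((-1) : K16) • (vd * (vb * (vA * (x)))) + (X 0 : K16) • (vc * (vA * (x))) + (X 0 : K16) • (vb * (vA * (x))) + ((-1) * X 3 + X 0 ^ 2 : K16) • (vA * (x)) := by
    intro x
    have h := congrArg (· * x) r6
    simp only [add_mul, smul_mul_assoc, mul_assoc, one_mul] at h
    linear_combination (norm := module) h
  have r7 : va * (vd) = ((-1) : K16) • (va * (vc)) + ((-1) : K16) • (va * (vb)) + ((-1) * X 0 : K16) • (va) := by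
    have h1 : va * (vA * (va)) = ((2) * X 0 : K16) • (va) := by
      rw [r4t]
      try simp only [r0, r0t, r1, r1t, r2, r2t, r3, r3t, r4, r4t, r5, r5t, r6, r6t, mul_assoc, mul_add, add_mul, smul_mul_assoc, mul_smul_comm, smul_smul, one_mul, mul_one, smul_add]
      try module
    have h2 : va * (vA * (va)) = ((-1) : K16) • (va * (vd)) + ((-1) : K16) • (va * (vc)) + ((-1) : K16) • (va * (vb)) + (X 0 : K16) • (va) := by
      rw [r3]
      try simp only [r0, r0t, r1, r1t, r2, r2t, r3, r3t, r4, r4t, r5, r5t, r6, r6t, mul_assoc, mul_add, add_mul, smul_mul_assoc, mul_smul_comm, smul_smul, one_mul, mul_one, smul_add]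
      try module
    linear_combination (norm := module) h2 - h1
  have r7t : ∀ x : R, va * (vd * (x)) = ((-1) : K16) • (va * (vc * (x))) + ((-1) : K16) • (va * (vb * (x))) + ((-1) * X 0 : K16) • (va * (x)) := by
    intro x
    have h := congrArg (· * x) r7
    simp only [add_mul, smul_mul_assoc, mul_assoc, one_mul] at h
    linear_combination (norm := module) h
  have r8 : vd * (vc) = ((-1) : K16) • (vd * (vb)) + ((-1) : K16) • (vc * (vd)) + ((-1) : K16) • (vc * (vb)) + ((-1) : K16) • (vb * (vd)) + ((-1) : K16) • (vb * (vc)) + ((-1) * X 3 + (-1) * X 2 + (-1) * X 1 + X 0 ^ 2 : K16) • ((1 : R)) := by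
    have h1 : vA * (va * (vd)) = ((-1) : K16) • (vc * (vd)) + ((-1) : K16) • (vb * (vd)) + (X 0 : K16) • (vd) + ((-1) * X 3 : K16) • ((1 : R)) := by
      rw [r3t]
      try simp only [r0, r0t, r1, r1t, r2, r2t, r3, r3t, r4, r4t, r5, r5t, r6, r6t, r7, r7t, mul_assoc, mul_add, add_mul, smul_mul_assoc, mul_smul_comm, smul_smul, one_mul, mul_one, smul_add]
      try module
    have h2 : vA * (va * (vd)) = ((1) : K16) • (vd * (vc)) + ((1) : K16) • (vd * (vb)) + ((1) : K16) • (vc * (vb)) + ((1) : K16) • (vb * (vc)) + (X 0 : K16) • (vd) + (X 2 + X 1 + (-1) * X 0 ^ 2 : K16) • ((1 : R)) := by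
      rw [r7]
      try simp only [r0, r0t, r1, r1t, r2, r2t, r3, r3t, r4, r4t, r5, r5t, r6, r6t, r7, r7t, mul_assoc, mul_add, add_mul, smul_mul_assoc, mul_smul_comm, smul_smul, one_mul, mul_one, smul_add]
      try module
    linear_combination (norm := module) h1 - h2
  have r8t : ∀ x : R, vd * (vc * (x)) = ((-1) : K16) • (vd * (vb * (x))) + ((-1) : K16) • (vc * (vd * (x))) + ((-1) : K16) • (vc * (vb * (x))) + ((-1) : K16) • (vb * (vd * (x))) + ((-1) : K16) • (vb * (vc * (x))) + ((-1) * X 3 + (-1) * X 2 + (-1) * X 1 + X 0 ^ 2 : K16) • x := by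
    intro x
    have h := congrArg (· * x) r8
    simp only [add_mul, smul_mul_assoc, mul_assoc, one_mul] at h
    linear_combination (norm := module) h
  have r9 : vd * (vb * (vc)) = ((1) : K16) • (vc * (vd * (vb))) + ((1) : K16) • (vc * (vb * (vd))) + ((1) : K16) • (vb * (vd * (vb))) + ((1) : K16) • (vb * (vc * (vd))) + ((1) : K16) • (vb * (vc * (vb))) + (X 1 : K16) • (vd) + (X 1 : K16) • (vc) + (X 3 + X 2 + X 1 + (-1) * X 0 ^ 2 : K16) • (vb) := by
    have h1 : vd * (vd * (vc)) = (X 3 : K16) • (vc) := by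
      rw [r2t]
      try simp only [r0, r0t, r1, r1t, r2, r2t, r3, r3t, r4, r4t, r5, r5t, r6, r6t, r7, r7t, r8, r8t, mul_assoc, mul_add, add_mul, smul_mul_assoc, mul_smul_comm, smul_smul, one_mul, mul_one, smul_add]
      try module
    have h2 : vd * (vd * (vc)) = ((-1) : K16) • (vd * (vb * (vc))) + ((1) : K16) • (vc * (vd * (vb))) + ((1) : K16) • (vc * (vb * (vd))) + ((1) : K16) • (vb * (vd * (vb))) + ((1) : K16) • (vb * (vc * (vd))) + ((1) : K16) • (vb * (vc * (vb))) + (X 1 : K16) • (vd) + (X 3 + X 1 : K16) • (vc) + (X 3 + X 2 + X 1 + (-1) * X 0 ^ 2 : K16) • (vb) := by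
      rw [r8]
      try simp only [r0, r0t, r1, r1t, r2, r2t, r3, r3t, r4, r4t, r5, r5t, r6, r6t, r7, r7t, r8, r8t, mul_assoc, mul_add, add_mul, smul_mul_assoc, mul_smul_comm, smul_smul, one_mul, mul_one, smul_add]
      try module
    linear_combination (norm := module) h2 - h1
  have r9t : ∀ x : R, vd * (vb * (vc * (x))) = ((1) : K16) • (vc * (vd * (vb * (x)))) + ((1) : K16) • (vc * (vb * (vd * (x)))) + ((1) : K16) • (vb * (vd * (vb * (x)))) + ((1) : K16) • (vb * (vc * (vd * (x)))) + ((1) : K16) • (vb * (vc * (vb * (x)))) + (X 1 : K16) • (vd * (x)) + (X 1 : K16) • (vc * (x)) + (X 3 + X 2 + X 1 + (-1) * X 0 ^ 2 : K16) • (vb * (x)) := by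
    intro x
    have h := congrArg (· * x) r9
    simp only [add_mul, smul_mul_assoc, mul_assoc, one_mul] at h
    linear_combination (norm := module) h
  have r10 : va * (vc * (vd)) = ((-1) : K16) • (va * (vb * (vd))) + (X 0 : K16) • (va * (vc)) + (X 0 : K16) • (va * (vb)) + ((-1) * X 3 + X 0 ^ 2 : K16) • (va) := by
    have h1 : va * (vd * (vd)) = ((-1) : K16) • (va * (vc * (vd))) + ((-1) : K16) • (va * (vb * (vd))) + (X 0 : K16) • (va * (vc)) + (X 0 : K16) • (va * (vb)) + (X 0 ^ 2 : K16) • (va) := by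
      rw [r7t]
      try simp only [r0, r0t, r1, r1t, r2, r2t, r3, r3t, r4, r4t, r5, r5t, r6, r6t, r7, r7t, r8, r8t, r9, r9t, mul_assoc, mul_add, add_mul, smul_mul_assoc, mul_smul_comm, smul_smul, one_mul, mul_one, smul_add]
      try module
    have h2 : va * (vd * (vd)) = (X 3 : K16) • (va) := by
      rw [r2]
      try simp only [r0, r0t, r1, r1t, r2, r2t, r3, r3t, r4, r4t, r5, r5t, r6, r6t, r7, r7t, r8, r8t, r9, r9t, mul_assoc, mul_add, add_mul, smul_mul_assoc, mul_smul_comm, smul_smul, one_mul, mul_one, smul_add]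
      try module
    linear_combination (norm := module) h1 - h2
  have r10t : ∀ x : R, va * (vc * (vd * (x))) = ((-1) : K16) • (va * (vb * (vd * (x)))) + (X 0 : K16) • (va * (vc * (x))) + (X 0 : K16) • (va * (vb * (x))) + ((-1) * X 3 + X 0 ^ 2 : K16) • (va * (x)) := by
    intro x
    have h := congrArg (· * x) r10
    simp only [add_mul, smul_mul_assoc, mul_assoc, one_mul] at h
    linear_combination (norm := module) h
  have r11 : va * (vc * (vb * (vA))) = ((-1) : K16) • (va * (vb * (vc * (vA)))) + ((-2) * X 0 : K16) • (va * (vc * (vA))) + ((-2) * X 0 : K16) • (va * (vb * (vA))) + ((2) * X 0 * X 3 + (-2) * X 0 * X 2 + (-2) * X 0 * X 1 + (-2) * X 0 ^ 3 : K16) • ((1 : R)) := by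
    have h1 : va * (vd * (vc * (vA))) = ((-1) : K16) • (va * (vb * (vc * (vA)))) + ((-1) * X 0 : K16) • (va * (vc * (vA))) + ((-2) * X 0 * X 2 : K16) • ((1 : R)) := by
      rw [r7t]
      try simp only [r0, r0t, r1, r1t, r2, r2t, r3, r3t, r4, r4t, r5, r5t, r6, r6t, r7, r7t, r8, r8t, r9, r9t, r10, r10t, mul_assoc, mul_add, add_mul, smul_mul_assoc, mul_smul_comm, smul_smul, one_mul, mul_one, smul_add]
      try module
    have h2 : va * (vd * (vc * (vA))) = ((1) : K16) • (va * (vc * (vb * (vA)))) + (X 0 : K16) • (va * (vc * (vA))) + ((2) * X 0 : K16) • (va * (vb * (vA))) + ((-2) * X 0 * X 3 + (2) * X 0 * X 1 + (2) * X 0 ^ 3 : K16) • ((1 : R)) := by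
      rw [r6]
      try simp only [r0, r0t, r1, r1t, r2, r2t, r3, r3t, r4, r4t, r5, r5t, r6, r6t, r7, r7t, r8, r8t, r9, r9t, r10, r10t, mul_assoc, mul_add, add_mul, smul_mul_assoc, mul_smul_comm, smul_smul, one_mul, mul_one, smul_add]
      try module
    linear_combination (norm := module) h1 - h2
  have r11t : ∀ x : R, va * (vc * (vb * (vA * (x)))) = ((-1) : K16) • (va * (vb * (vc * (vA * (x))))) + ((-2) * X 0 : K16) • (va * (vc * (vA * (x)))) + ((-2) * X 0 : K16) • (va * (vb * (vA * (x)))) + ((2) * X 0 * X 3 + (-2) * X 0 * X 2 + (-2) * X 0 * X 1 + (-2) * X 0 ^ 3 : K16) • x := by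
    intro x
    have h := congrArg (· * x) r11
    simp only [add_mul, smul_mul_assoc, mul_assoc, one_mul] at h
    linear_combination (norm := module) h
  have r12 : va * (vc * (vb * (vd))) = ((-1) : K16) • (va * (vc * (vb * (vc)))) + ((-1) : K16) • (va * (vb * (vc * (vd)))) + ((-1) : K16) • (va * (vb * (vc * (vb)))) + ((-1) * X 0 : K16) • (va * (vc * (vb))) + ((-1) * X 0 : K16) • (va * (vb * (vc))) + ((-1) * X 1 : K16) • (va * (vc)) + ((-1) * X 2 : K16) • (va * (vb)) := by
    have h1 : va * (vd * (vb * (vc))) = ((-1) : K16) • (va * (vc * (vb * (vc)))) + ((-1) * X 0 : K16) • (va * (vb * (vc))) + ((-1) * X 1 : K16) • (va * (vc)) := by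
      rw [r7t]
      try simp only [r0, r0t, r1, r1t, r2, r2t, r3, r3t, r4, r4t, r5, r5t, r6, r6t, r7, r7t, r8, r8t, r9, r9t, r10, r10t, r11, r11t, mul_assoc, mul_add, add_mul, smul_mul_assoc, mul_smul_comm, smul_smul, one_mul, mul_one, smul_add]
      try module
    have h2 : va * (vd * (vb * (vc))) = ((1) : K16) • (va * (vc * (vb * (vd)))) + ((1) : K16) • (va * (vb * (vc * (vd)))) + ((1) : K16) • (va * (vb * (vc * (vb)))) + (X 0 : K16) • (va * (vc * (vb))) + (X 2 : K16) • (va * (vb)) := by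
      rw [r9]
      try simp only [r0, r0t, r1, r1t, r2, r2t, r3, r3t, r4, r4t, r5, r5t, r6, r6t, r7, r7t, r8, r8t, r9, r9t, r10, r10t, r11, r11t, mul_assoc, mul_add, add_mul, smul_mul_assoc, mul_smul_comm, smul_smul, one_mul, mul_one, smul_add]
      try module
    linear_combination (norm := module) h1 - h2
  have r12t : ∀ x : R, va * (vc * (vb * (vd * (x)))) = ((-1) : K16) • (va * (vc * (vb * (vc * (x))))) + ((-1) : K16) • (va * (vb * (vc * (vd * (x))))) + ((-1) : K16) • (va * (vb * (vc * (vb * (x))))) + ((-1) * X 0 : K16) • (va * (vc * (vb * (x)))) + ((-1) * X 0 : K16) • (va * (vb * (vc * (x)))) + ((-1) * X 1 : K16) • (va * (vc * (x))) + ((-1) * X 2 : K16) • (va * (vb * (x))) := by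
    intro x
    have h := congrArg (· * x) r12
    simp only [add_mul, smul_mul_assoc, mul_assoc, one_mul] at h
    linear_combination (norm := module) h
  have r13 : va * (vc * (vb * (vc * (vd)))) = ((-1) : K16) • (va * (vb * (vc * (vb * (vd))))) + (X 0 : K16) • (va * (vc * (vb * (vc)))) + (X 0 : K16) • (va * (vb * (vc * (vb)))) + ((-1) * X 3 + X 0 ^ 2 : K16) • (va * (vc * (vb))) + ((-1) * X 2 + X 1 : K16) • (va * (vb * (vd))) + ((-1) * X 3 + X 0 ^ 2 : K16) • (va * (vb * (vc))) + (X 0 * X 2 + (-1) * X 0 * X 1 : K16) • (va * (vb)) + (X 1 * X 3 + (-1) * X 0 ^ 2 * X 1 : K16) • (va) := by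
    have h1 : va * (vc * (vd * (vb * (vc)))) = ((-1) : K16) • (va * (vb * (vc * (vd * (vb))))) + ((-1) : K16) • (va * (vb * (vc * (vb * (vd))))) + (X 0 : K16) • (va * (vc * (vb * (vc)))) + ((-1) * X 3 + (-1) * X 1 + X 0 ^ 2 : K16) • (va * (vb * (vc))) + ((-1) * X 1 * X 2 : K16) • (va) := by
      rw [r10t]
      try simp only [r0, r0t, r1, r1t, r2, r2t, r3, r3t, r4, r4t, r5, r5t, r6, r6t, r7, r7t, r8, r8t, r9, r9t, r10, r10t, r11, r11t, r12, r12t, mul_assoc, mul_add, add_mul, smul_mul_assoc, mul_smul_comm, smul_smul, one_mul, mul_one, smul_add]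
      try module
    have h2 : va * (vc * (vd * (vb * (vc)))) = ((1) : K16) • (va * (vc * (vb * (vc * (vd))))) + ((-1) : K16) • (va * (vb * (vc * (vd * (vb))))) + ((-1) * X 0 : K16) • (va * (vb * (vc * (vb)))) + (X 3 + (-1) * X 0 ^ 2 : K16) • (va * (vc * (vb))) + (X 2 + (-1) * X 1 : K16) • (va * (vb * (vd))) + ((-1) * X 1 : K16) • (va * (vb * (vc))) + ((-1) * X 0 * X 2 + X 0 * X 1 : K16) • (va * (vb)) + ((-1) * X 1 * X 3 + (-1) * X 1 * X 2 + X 0 ^ 2 * X 1 : K16) • (va) := by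
      rw [r9]
      try simp only [r0, r0t, r1, r1t, r2, r2t, r3, r3t, r4, r4t, r5, r5t, r6, r6t, r7, r7t, r8, r8t, r9, r9t, r10, r10t, r11, r11t, r12, r12t, mul_assoc, mul_add, add_mul, smul_mul_assoc, mul_smul_comm, smul_smul, one_mul, mul_one, smul_add]
      try module
    linear_combination (norm := module) h1 - h2
  have r13t : ∀ x : R, va * (vc * (vb * (vc * (vd * (x))))) = ((-1) : K16) • (va * (vb * (vc * (vb * (vd * (x)))))) + (X 0 : K16) • (va * (vc * (vb * (vc * (x))))) + (X 0 : K16) • (va * (vb * (vc * (vb * (x))))) + ((-1) * X 3 + X 0 ^ 2 : K16) • (va * (vc * (vb * (x)))) + ((-1) * X 2 + X 1 : K16) • (va * (vb * (vd * (x)))) + ((-1) * X 3 + X 0 ^ 2 : K16) • (va * (vb * (vc * (x)))) + (X 0 * X 2 + (-1) * X 0 * X 1 : K16) • (va * (vb * (x))) + (X 1 * X 3 + (-1) * X 0 ^ 2 * X 1 : K16) • (va * (x)) := by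
    intro x
    have h := congrArg (· * x) r13
    simp only [add_mul, smul_mul_assoc, mul_assoc, one_mul] at h
    linear_combination (norm := module) h
  have r14 : va * (vc * (vb * (vc * (vb * (vA))))) = ((-1) : K16) • (va * (vb * (vc * (vb * (vc * (vA)))))) + ((-2) * X 0 : K16) • (va * (vc * (vb * (vc * (vA))))) + ((-2) * X 0 : K16) • (va * (vb * (vc * (vb * (vA))))) + ((-2) * X 0 * X 3 + (2) * X 0 * X 2 + (2) * X 0 ^ 3 : K16) • (va * (vc * (vA))) + ((-2) * X 0 * X 3 + (2) * X 0 * X 1 + (2) * X 0 ^ 3 : K16) • (va * (vb * (vA))) + ((2) * X 0 * X 3 ^ 2 + (-4) * X 0 * X 2 * X 3 + (2) * X 0 * X 2 ^ 2 + (-4) * X 0 * X 1 * X 3 + (2) * X 0 * X 1 ^ 2 + (-4) * X 0 ^ 3 * X 3 + (4) * X 0 ^ 3 * X 2 + (4) * X 0 ^ 3 * X 1 + (2) * X 0 ^ 5 : K16) • ((1 : R)) := by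
    have h1 : va * (vc * (vb * (vd * (vc * (vA))))) = ((1) : K16) • (va * (vb * (vc * (vd * (vb * (vA)))))) + ((-1) : K16) • (va * (vb * (vc * (vb * (vc * (vA)))))) + ((-1) * X 0 : K16) • (va * (vc * (vb * (vc * (vA))))) + ((-1) * X 0 : K16) • (va * (vb * (vc * (vb * (vA))))) + (X 3 + (-1) * X 0 ^ 2 : K16) • (va * (vb * (vc * (vA)))) + ((2) * X 0 * X 2 : K16) • (va * (vc * (vA))) + ((-2) * X 0 * X 2 * X 3 + (2) * X 0 * X 2 ^ 2 + (2) * X 0 ^ 3 * X 2 : K16) • ((1 : R)) := by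
      rw [r12t]
      try simp only [r0, r0t, r1, r1t, r2, r2t, r3, r3t, r4, r4t, r5, r5t, r6, r6t, r7, r7t, r8, r8t, r9, r9t, r10, r10t, r11, r11t, r12, r12t, r13, r13t, mul_assoc, mul_add, add_mul, smul_mul_assoc, mul_smul_comm, smul_smul, one_mul, mul_one, smul_add]
      try module
    have h2 : va * (vc * (vb * (vd * (vc * (vA))))) = ((1) : K16) • (va * (vc * (vb * (vc * (vb * (vA)))))) + ((1) : K16) • (va * (vb * (vc * (vd * (vb * (vA)))))) + (X 0 : K16) • (va * (vc * (vb * (vc * (vA))))) + (X 0 : K16) • (va * (vb * (vc * (vb * (vA))))) + (X 3 + (-1) * X 0 ^ 2 : K16) • (va * (vb * (vc * (vA)))) + ((2) * X 0 * X 3 + (-2) * X 0 ^ 3 : K16) • (va * (vc * (vA))) + ((2) * X 0 * X 3 + (-2) * X 0 * X 1 + (-2) * X 0 ^ 3 : K16) • (va * (vb * (vA))) + ((-2) * X 0 * X 3 ^ 2 + (2) * X 0 * X 2 * X 3 + (4) * X 0 * X 1 * X 3 + (-2) * X 0 * X 1 ^ 2 + (4) * X 0 ^ 3 * X 3 + (-2)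 * X 0 ^ 3 * X 2 + (-4) * X 0 ^ 3 * X 1 + (-2) * X 0 ^ 5 : K16) • ((1 : R)) := by
      rw [r6]
      try simp only [r0, r0t, r1, r1t, r2, r2t, r3, r3t, r4, r4t, r5, r5t, r6, r6t, r7, r7t, r8, r8t, r9, r9t, r10, r10t, r11, r11t, r12, r12t, r13, r13t, mul_assoc, mul_add, add_mul, smul_mul_assoc, mul_smul_comm, smul_smul, one_mul, mul_one, smul_add]
      try module
    linear_combination (norm := module) h1 - h2
  have r14t : ∀ x : R, va * (vc * (vb * (vc * (vb * (vA * (x)))))) = ((-1) : K16) • (va * (vb * (vc * (vb * (vc * (vA * (x))))))) + ((-2) * X 0 : K16) • (va * (vc * (vb * (vc * (vA * (x)))))) + ((-2) * X 0 : K16) • (va * (vb * (vc * (vb * (vA * (x)))))) + ((-2) * X 0 * X 3 + (2) * X 0 * X 2 + (2) * X 0 ^ 3 : K16) • (va * (vc * (vA * (x)))) + ((-2) * X 0 * X 3 + (2) * X 0 * X 1 + (2) * X 0 ^ 3 : K16) • (va * (vb * (vA * (x)))) + ((2) * X 0 * X 3 ^ 2 + (-4) * X 0 * X 2 * X 3 +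 (2) * X 0 * X 2 ^ 2 + (-4) * X 0 * X 1 * X 3 + (2) * X 0 * X 1 ^ 2 + (-4) * X 0 ^ 3 * X 3 + (4) * X 0 ^ 3 * X 2 + (4) * X 0 ^ 3 * X 1 + (2) * X 0 ^ 5 : K16) • x := by
    intro x
    have h := congrArg (· * x) r14
    simp only [add_mul, smul_mul_assoc, mul_assoc, one_mul] at h
    linear_combination (norm := module) h
  have e2 : (2 : R) = ((2 : K16)) • (1 : R) := by
    rw [← map_ofNat (algebraMap K16 R) 2, Algebra.algebraMap_eq_smul_one]
  have e4 : (4 : R) = ((4 : K16)) • (1 : R) := by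
    rw [← map_ofNat (algebraMap K16 R) 4, Algebra.algebraMap_eq_smul_one]
  rw [e2, e4]
  simp only [Algebra.algebraMap_eq_smul_one, pow_two, sub_eq_add_neg, neg_smul, neg_add, neg_mul, mul_neg, neg_neg, smul_neg, r0, r0t, r1, r1t, r2, r2t, r3, r3t, r4, r4t, r5, r5t, r6, r6t, r7, r7t, r8, r8t, r9, r9t, r10, r10t, r11, r11t, r12, r12t, r13, r13t, r14, r14t, mul_assoc, mul_add, add_mul, smul_mul_assoc, mul_smul_comm, smul_smul, one_mul, mul_one, smul_add]
  module

set_option maxHeartbeats 4000000 in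
/-- The degree-12 hypersurface relation satisfied by the generators of `e₀𝒜₂e₀` inside
the universal flopping algebra of length 2. -/
theorem hypersurface_relation :
    x' * x' + 2 * s16 * E16 * x'
      = E16 * y16 * z16 - 4 * s16^2 * Tb * Tc + Tb * y16 * y16 + Tc * z16 * z16 := by
  have hb : π (ι K16 2) * π (ι K16 2) = algebraMap K16 A16 (X 1) := by
    have h := RingQuot.mkAlgHom_rel K16 FlopRel.rb
    rwa [map_pow, pow_two, AlgHom.commutes] at h
  have hc : π (ι K16 3) * π (ι K16 3) = algebraMap K16 A16 (X 2) := by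
    have h := RingQuot.mkAlgHom_rel K16 FlopRel.rc
    rwa [map_pow, pow_two, AlgHom.commutes] at h
  have hd : π (ι K16 4) * π (ι K16 4) = algebraMap K16 A16 (X 3) := by
    have h := RingQuot.mkAlgHom_rel K16 FlopRel.rd
    rwa [map_pow, pow_two, AlgHom.commutes] at h
  have hlin : π (ι K16 1) * π (ι K16 0) + π (ι K16 2) + π (ι K16 3) + π (ι K16 4)
      = algebraMap K16 A16 (X 0) := by
    have h := RingQuot.mkAlgHom_rel K16 FlopRel.rlin
    rwa [map_add, map_add, map_add, map_mul, AlgHom.commutes] at h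
  have haA : π (ι K16 0) * π (ι K16 1) = 2 * algebraMap K16 A16 (X 0) := by
    have h := RingQuot.mkAlgHom_rel K16 FlopRel.raA
    rwa [map_mul, map_mul, map_ofNat, AlgHom.commutes] at h
  have key := auxGL (π (ι K16 0)) (π (ι K16 1)) (π (ι K16 2)) (π (ι K16 3)) (π (ι K16 4))
    hb hc hd hlin haA
  simp only [x', y16, z16, s16, Tb, Tc, Td, E16, map_mul] at key ⊢
  exact key

end
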